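/- (Singular Gronwall) Let f : (0,T] → [0,∞) be continuous with f(t) ≤ a·t^{β−1} + c·∫₀ᵗ (t−s)^{γ−1} f(s) ds for all t ∈ (0,T], where a, c ≥ 0, β ∈ (0,1], γ ∈ (0,1]. Then there exists a constant C = C(c, γ, β, T) such that f(t) ≤ C·a·t^{β−1} for all t ∈ (0,T]. -/

import Mathlib

open MeasureTheory Set Real
open scoped ENNReal

noncomputable def Kc (p q : ℝ) : ℝ := ((2:ℝ)^(1-p)+1)/q + ((2:ℝ)^(1-q)+1)/p

lemma Kc_pos {p q : ℝ} (hp : 0 < p) (hq : 0 < q) : 0 < Kc p q := by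
  have h1 : (0:ℝ) < (2:ℝ)^(1-p) := rpow_pos_of_pos two_pos _
  have h2 : (0:ℝ) < (2:ℝ)^(1-q) := rpow_pos_of_pos two_pos _
  unfold Kc; positivity

lemma intOn_rpow {q : ℝ} (hq : 0 < q) {a b : ℝ} (hab : a ≤ b) :
    IntegrableOn (fun v : ℝ => v ^ (q-1)) (Ioo a b) :=
  (intervalIntegrable_iff_integrableOn_Ioo_of_le hab).mp
    (intervalIntegral.intervalIntegrable_rpow' (by linarith))

lemma intOn_rpow_sub {p : ℝ} (hp : 0 < p) {d a b : ℝ} (hab : a ≤ b) :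
    IntegrableOn (fun v : ℝ => (d - v) ^ (p-1)) (Ioo a b) := by
  have h := (intervalIntegral.intervalIntegrable_rpow' (r := p - 1) (by linarith)
      (a := d - a) (b := d - b)).comp_sub_left d
  have h2 : IntervalIntegrable (fun v : ℝ => (d - v) ^ (p-1)) volume a b := by
    simpa using h
  exact (intervalIntegrable_iff_integrableOn_Ioo_of_le hab).mp h2

lemma int_rpow_Ioo {q : ℝ} (hq : 0 < q) {m : ℝ} (hm : 0 ≤ m) :
    ∫ v in Ioo (0:ℝ) m, v ^ (q-1) = m ^ q / q := by
  rw [← integral_Ioc_eq_integral_Ioo, ← intervalIntegral.integral_of_le hm,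
    integral_rpow (Or.inl (by linarith))]
  rw [show q - 1 + 1 = q by ring, zero_rpow (ne_of_gt hq)]
  ring

lemma int_rpow_sub_Ioo {p : ℝ} (hp : 0 < p) {s t : ℝ} (hst : s ≤ t) :
    ∫ v in Ioo s t, (t - v) ^ (p-1) = (t - s) ^ p / p := by
  rw [← integral_Ioc_eq_integral_Ioo, ← intervalIntegral.integral_of_le hst,
    intervalIntegral.integral_comp_sub_left (fun x => x ^ (p-1)) t,
    integral_rpow (Or.inl (by linarith))]
  rw [show p - 1 + 1 = p by ring, sub_self, zero_rpow (ne_of_gt hp)]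
  ring

lemma beta_bound {p q r : ℝ} (hp : 0 < p) (hq : 0 < q) (hr : 0 < r) :
    IntegrableOn (fun v : ℝ => (r - v) ^ (p-1) * v ^ (q-1)) (Ioo 0 r) ∧
    ∫ v in Ioo (0:ℝ) r, (r - v) ^ (p-1) * v ^ (q-1) ≤ Kc p q * r ^ (p+q-1) := by
  have hm0 : (0:ℝ) < r/2 := by linarith
  have hmr : r/2 < r := by linarith
  have h2p : (0:ℝ) < (2:ℝ)^(1-p) := rpow_pos_of_pos two_pos _
  have h2q : (0:ℝ) < (2:ℝ)^(1-q) := rpow_pos_of_pos two_pos _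
  have hrp : (0:ℝ) < r^(p-1) := rpow_pos_of_pos hr _
  have hrq : (0:ℝ) < r^(q-1) := rpow_pos_of_pos hr _
  have hhalfp : (r/2) ^ (p-1) = (2:ℝ)^(1-p) * r^(p-1) := by
    rw [div_rpow hr.le (by norm_num), div_eq_mul_inv, ← rpow_neg (by norm_num : (0:ℝ) ≤ 2),
      show -(p-1) = 1-p by ring]
    ring
  have hhalfq : (r/2) ^ (q-1) = (2:ℝ)^(1-q) * r^(q-1) := by
    rw [div_rpow hr.le (by norm_num), div_eq_mul_inv, ← rpow_neg (by norm_num : (0:ℝ) ≤ 2),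
      show -(q-1) = 1-q by ring]
    ring
  have hb1 : ∀ v ∈ Ioo (0:ℝ) (r/2), (r-v)^(p-1) ≤ ((2:ℝ)^(1-p)+1) * r^(p-1) := by
    intro v hv
    rcases le_total p 1 with h1 | h1
    · have : (r-v)^(p-1) ≤ (r/2)^(p-1) :=
        rpow_le_rpow_of_nonpos hm0 (by linarith [hv.2]) (by linarith)
      rw [hhalfp] at this; nlinarith
    · have : (r-v)^(p-1) ≤ r^(p-1) :=
        rpow_le_rpow (by linarith [hv.2]) (by linarith [hv.1]) (by linarith)
      nlinarith
  have hb2 : ∀ v ∈ Ico (r/2) r, v^(q-1) ≤ ((2:ℝ)^(1-q)+1) * r^(q-1) := by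
    intro v hv
    rcases le_total q 1 with h1 | h1
    · have : v^(q-1) ≤ (r/2)^(q-1) :=
        rpow_le_rpow_of_nonpos hm0 hv.1 (by linarith)
      rw [hhalfq] at this; nlinarith
    · have : v^(q-1) ≤ r^(q-1) :=
        rpow_le_rpow (by linarith [hv.1]) (by linarith [hv.2]) (by linarith)
      nlinarith
  have hmeas : Measurable (fun v : ℝ => (r - v) ^ (p-1) * v ^ (q-1)) :=
    ((measurable_const.sub measurable_id).pow measurable_const).mul
      (measurable_id.pow measurable_const)
  have I1 : IntegrableOn (fun v : ℝ => (r - v) ^ (p-1) * v ^ (q-1)) (Ioo 0 (r/2)) := by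
    apply Integrable.mono' ((intOn_rpow hq hm0.le).const_mul (((2:ℝ)^(1-p)+1) * r^(p-1)))
      hmeas.aestronglyMeasurable.restrict
    filter_upwards [ae_restrict_mem measurableSet_Ioo] with v hv
    rw [norm_of_nonneg (mul_nonneg (rpow_nonneg (by linarith [hv.2]) _) (rpow_nonneg hv.1.le _))]
    exact mul_le_mul_of_nonneg_right (hb1 v hv) (rpow_nonneg hv.1.le _)
  have I2 : IntegrableOn (fun v : ℝ => (r - v) ^ (p-1) * v ^ (q-1)) (Ico (r/2) r) := by
    rw [integrableOn_Ico_iff_integrableOn_Ioo]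
    apply Integrable.mono' ((intOn_rpow_sub hp (le_of_lt hmr)).mul_const (((2:ℝ)^(1-q)+1) * r^(q-1)))
      hmeas.aestronglyMeasurable.restrict
    filter_upwards [ae_restrict_mem measurableSet_Ioo] with v hv
    rw [norm_of_nonneg (mul_nonneg (rpow_nonneg (by linarith [hv.2]) _) (rpow_nonneg (by linarith [hv.1] : (0:ℝ) ≤ v) _))]
    exact mul_le_mul_of_nonneg_left (hb2 v ⟨hv.1.le, hv.2⟩) (rpow_nonneg (by linarith [hv.2]) _)
  have hunion : Ioo (0:ℝ) (r/2) ∪ Ico (r/2) r = Ioo 0 r := Ioo_union_Ico_eq_Ioo hm0 hmr.le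
  have hdisj : Disjoint (Ioo (0:ℝ) (r/2)) (Ico (r/2) r) := by
    apply Set.disjoint_left.mpr
    rintro x ⟨_, h1⟩ ⟨h2, _⟩
    exact absurd h1 (not_lt.mpr h2)
  constructor
  · rw [← hunion]; exact I1.union I2
  · rw [← hunion, setIntegral_union hdisj measurableSet_Ico I1 I2]
    have e1 : ∫ v in Ioo (0:ℝ) (r/2), (r - v) ^ (p-1) * v ^ (q-1) ≤
        ((2:ℝ)^(1-p)+1) * r^(p-1) * ((r/2)^q / q) := by
      rw [show ((2:ℝ)^(1-p)+1) * r^(p-1) * ((r/2)^q / q) =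
          ∫ v in Ioo (0:ℝ) (r/2), ((2:ℝ)^(1-p)+1) * r^(p-1) * v^(q-1) by
        rw [MeasureTheory.integral_const_mul, int_rpow_Ioo hq hm0.le]]
      apply setIntegral_mono_on I1 ((intOn_rpow hq hm0.le).const_mul _) measurableSet_Ioo
      intro v hv
      exact mul_le_mul_of_nonneg_right (hb1 v hv) (rpow_nonneg hv.1.le _)
    have e2 : ∫ v in Ico (r/2) r, (r - v) ^ (p-1) * v ^ (q-1) ≤
        ((r/2)^p / p) * (((2:ℝ)^(1-q)+1) * r^(q-1)) := by
      rw [show ((r/2)^p / p) * (((2:ℝ)^(1-q)+1) * r^(q-1)) =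
          ∫ v in Ico (r/2) r, (r - v)^(p-1) * (((2:ℝ)^(1-q)+1) * r^(q-1)) by
        rw [MeasureTheory.integral_mul_const, integral_Ico_eq_integral_Ioo, int_rpow_sub_Ioo hp hmr.le,
          show r - r/2 = r/2 by ring]]
      apply setIntegral_mono_on I2 (by
        rw [integrableOn_Ico_iff_integrableOn_Ioo]
        exact (intOn_rpow_sub hp (le_of_lt hmr)).mul_const _) measurableSet_Ico
      intro v hv
      exact mul_le_mul_of_nonneg_left (hb2 v hv) (rpow_nonneg (by linarith [hv.2]) _)
    have hq2 : (r/2)^q ≤ r^q := rpow_le_rpow hm0.le hmr.le hq.le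
    have hp2 : (r/2)^p ≤ r^p := rpow_le_rpow hm0.le hmr.le hp.le
    have hrpq1 : r^(p-1) * r^q = r^(p+q-1) := by
      rw [← rpow_add hr]; ring_nf
    have hrpq2 : r^p * r^(q-1) = r^(p+q-1) := by
      rw [← rpow_add hr]; ring_nf
    have hX : (0:ℝ) < (2:ℝ)^(1-p)+1 := by positivity
    have hY : (0:ℝ) < (2:ℝ)^(1-q)+1 := by positivity
    have f1 : ((2:ℝ)^(1-p)+1) * r^(p-1) * ((r/2)^q / q) ≤ ((2:ℝ)^(1-p)+1)/q * r^(p+q-1) := by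
      rw [← hrpq1, ← mul_div_assoc, div_mul_eq_mul_div, div_le_div_iff₀ hq hq]
      nlinarith [mul_le_mul_of_nonneg_left hq2 (mul_nonneg hX.le hrp.le)]
    have f2 : ((r/2)^p / p) * (((2:ℝ)^(1-q)+1) * r^(q-1)) ≤ ((2:ℝ)^(1-q)+1)/p * r^(p+q-1) := by
      rw [← hrpq2, div_mul_eq_mul_div, div_mul_eq_mul_div, div_le_div_iff₀ hp hp]
      nlinarith [mul_le_mul_of_nonneg_right hp2 (mul_nonneg hY.le hrq.le)]
    have hKc : Kc p q * r^(p+q-1) =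
        ((2:ℝ)^(1-p)+1)/q * r^(p+q-1) + ((2:ℝ)^(1-q)+1)/p * r^(p+q-1) := by
      unfold Kc; ring
    linarith [e1, e2, f1, f2]

lemma beta_bound_shift {p q s t : ℝ} (hp : 0 < p) (hq : 0 < q) (hst : s < t) :
    IntegrableOn (fun u : ℝ => (t - u) ^ (p-1) * (u - s) ^ (q-1)) (Ioo s t) ∧
    ∫ u in Ioo s t, (t - u) ^ (p-1) * (u - s) ^ (q-1) ≤ Kc p q * (t - s) ^ (p+q-1) := by
  obtain ⟨H1, H2⟩ := beta_bound hp hq (sub_pos.mpr hst)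
  have hfe : (fun u : ℝ => (t - u) ^ (p-1) * (u - s) ^ (q-1)) =
      fun u : ℝ => ((t - s) - (u - s)) ^ (p-1) * (u - s) ^ (q-1) := by
    funext u; congr 2; ring
  have hII : IntervalIntegrable (fun v : ℝ => ((t-s) - v) ^ (p-1) * v ^ (q-1)) volume 0 (t-s) :=
    (intervalIntegrable_iff_integrableOn_Ioo_of_le (by linarith)).mpr H1
  have hII2 := hII.comp_sub_right s
  constructor
  · rw [hfe, ← intervalIntegrable_iff_integrableOn_Ioo_of_le hst.le]
    have : (0:ℝ) + s = s := by ring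
    have h2 : t - s + s = t := by ring
    rw [this, h2] at hII2
    exact hII2
  · rw [hfe, ← integral_Ioc_eq_integral_Ioo, ← intervalIntegral.integral_of_le hst.le]
    have := intervalIntegral.integral_comp_sub_right
      (fun v : ℝ => ((t-s) - v) ^ (p-1) * v ^ (q-1)) s (a := s) (b := t)
    rw [this, sub_self]
    rw [intervalIntegral.integral_of_le (by linarith), integral_Ioc_eq_integral_Ioo]
    exact H2

lemma lbeta {p q s t : ℝ} (hp : 0 < p) (hq : 0 < q) (hst : s < t) :
    ∫⁻ u in Ioo s t, ENNReal.ofReal ((t - u) ^ (p-1) * (u - s) ^ (q-1)) ≤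
      ENNReal.ofReal (Kc p q * (t - s) ^ (p+q-1)) := by
  obtain ⟨H1, H2⟩ := beta_bound_shift hp hq hst
  rw [← ofReal_integral_eq_lintegral_ofReal H1 (by
    filter_upwards [ae_restrict_mem measurableSet_Ioo] with u hu
    exact mul_nonneg (rpow_nonneg (by linarith [hu.2]) _) (rpow_nonneg (by linarith [hu.1]) _))]
  exact ENNReal.ofReal_le_ofReal H2

lemma lint_rpow {q : ℝ} (hq : 0 < q) {m : ℝ} (hm : 0 ≤ m) :
    ∫⁻ v in Ioo (0:ℝ) m, ENNReal.ofReal (v ^ (q-1)) = ENNReal.ofReal (m ^ q / q) := by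
  rw [← ofReal_integral_eq_lintegral_ofReal (intOn_rpow hq hm) (by
    filter_upwards [ae_restrict_mem measurableSet_Ioo] with v hv
    exact rpow_nonneg hv.1.le _)]
  rw [int_rpow_Ioo hq hm]

set_option maxHeartbeats 2000000 in
theorem singular_gronwall (T a c β γ : ℝ) (f : ℝ → ℝ) (hT : 0 < T)
    (ha : 0 ≤ a) (hc : 0 ≤ c) (hβ : β ∈ Set.Ioc (0 : ℝ) 1) (hγ : γ ∈ Set.Ioc (0 : ℝ) 1)
    (hcont : ContinuousOn f (Set.Ioc 0 T))
    (hnonneg : ∀ t ∈ Set.Ioc (0 : ℝ) T, 0 ≤ f t)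
    (hineq : ∀ t ∈ Set.Ioc (0 : ℝ) T,
      f t ≤ a * t ^ (β - 1) + c * ∫ s in Set.Ioo (0 : ℝ) t, (t - s) ^ (γ - 1) * f s) :
    ∃ C : ℝ, 0 < C ∧ ∀ t ∈ Set.Ioc (0 : ℝ) T, f t ≤ C * a * t ^ (β - 1) := by
  obtain ⟨hβ0, hβ1⟩ := hβ
  obtain ⟨hγ0, hγ1⟩ := hγ
  -- trivial case c = 0
  rcases eq_or_lt_of_le hc with hc0 | hc0
  · refine ⟨1, one_pos, fun t ht => ?_⟩
    have h := hineq t ht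
    rw [← hc0] at h
    simp only [zero_mul, add_zero] at h
    simpa [one_mul] using h
  -- measurable nonneg modification G of f
  have hfae : AEMeasurable f (volume.restrict (Ioc 0 T)) :=
    hcont.aemeasurable measurableSet_Ioc
  set G : ℝ → ℝ := fun s => max (hfae.mk f s) 0 with hGdef
  have hGmeas : Measurable G := hfae.measurable_mk.max measurable_const
  have hGnn : ∀ s, 0 ≤ G s := fun s => le_max_right _ _
  have hfG : ∀ᵐ s ∂(volume.restrict (Ioc 0 T)), f s = G s := by
    filter_upwards [hfae.ae_eq_mk, ae_restrict_mem measurableSet_Ioc] with s h1 h2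
    rw [hGdef]; simp only [← h1]; rw [max_eq_left (hnonneg s h2)]
  -- kernel lintegral
  set KK : ℝ → ℝ → ℝ≥0∞ := fun e t =>
    ∫⁻ u in Ioo 0 t, ENNReal.ofReal ((t - u) ^ (e - 1) * G u) with hKKdef
  set FF : ℝ → ℝ≥0∞ := fun t => ∫⁻ s in Ioo 0 t, ENNReal.ofReal (G s) with hFFdef
  -- real inequality in terms of KK
  have hreal : ∀ t ∈ Ioc (0:ℝ) T, f t ≤ a * t ^ (β - 1) + c * (KK γ t).toReal := by
    intro t ht
    have hsub : Ioo (0:ℝ) t ⊆ Ioc 0 T := fun s hs => ⟨hs.1, le_trans hs.2.le ht.2⟩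
    have hcongr : ∫ s in Ioo (0:ℝ) t, (t - s) ^ (γ-1) * f s
        = ∫ s in Ioo (0:ℝ) t, (t - s) ^ (γ-1) * G s := by
      apply integral_congr_ae
      filter_upwards [ae_restrict_of_ae_restrict_of_subset hsub hfG] with s hs
      rw [hs]
    have hratio : ∫ s in Ioo (0:ℝ) t, (t - s) ^ (γ-1) * G s = (KK γ t).toReal := by
      rw [integral_eq_lintegral_of_nonneg_ae ?_ ?_]
      · filter_upwards [ae_restrict_mem measurableSet_Ioo] with s hs
        exact mul_nonneg (rpow_nonneg (by linarith [hs.2]) _) (hGnn s)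
      · exact (((measurable_const.sub measurable_id).pow measurable_const).mul
          hGmeas).aestronglyMeasurable
    have h := hineq t ht
    rw [hcongr, hratio] at h
    exact h
  -- pointwise ennreal inequality
  have hof : ∀ u ∈ Ioc (0:ℝ) T, ENNReal.ofReal (f u) ≤
      ENNReal.ofReal (a * u ^ (β - 1)) + ENNReal.ofReal c * KK γ u := by
    intro u hu
    refine le_trans (ENNReal.ofReal_le_ofReal (hreal u hu)) ?_
    refine le_trans (ENNReal.ofReal_add_le) ?_
    gcongr
    rw [ENNReal.ofReal_mul hc]
    gcongr
    exact ENNReal.ofReal_toReal_le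
  -- Tonelli swap master inequality
  have hswap : ∀ p : ℝ, 0 < p → ∀ t : ℝ, 0 < t →
      ∫⁻ u in Ioo 0 t, ENNReal.ofReal ((t - u) ^ (p - 1)) * KK γ u ≤
        ENNReal.ofReal (Kc p γ) * KK (p + γ) t := by
    intro p hp t ht
    set g : ℝ → ℝ → ℝ≥0∞ := fun u s =>
      if s < u then ENNReal.ofReal ((t - u) ^ (p-1) * ((u - s) ^ (γ-1) * G s)) else 0 with hgdef
    have hgm : Measurable (Function.uncurry g) := by
      apply Measurable.ite (measurableSet_lt measurable_snd measurable_fst) ?_ measurable_const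
      exact (((measurable_const.sub measurable_fst).pow measurable_const).mul
        (((measurable_fst.sub measurable_snd).pow measurable_const).mul
          (hGmeas.comp measurable_snd))).ennreal_ofReal
    have hLHS : ∫⁻ u in Ioo 0 t, ENNReal.ofReal ((t - u) ^ (p - 1)) * KK γ u
        = ∫⁻ u in Ioo 0 t, ∫⁻ s in Ioo 0 t, g u s := by
      apply setLIntegral_congr_fun measurableSet_Ioo
      intro u hu
      beta_reduce
      have e1 : (fun s => g u s) = (Iio u).indicator
          (fun s => ENNReal.ofReal ((t - u) ^ (p-1) * ((u - s) ^ (γ-1) * G s))) := by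
        funext s
        by_cases h : s < u
        · simp [hgdef, h, Set.indicator_of_mem (show s ∈ Iio u from h)]
        · simp [hgdef, h, Set.indicator_of_notMem (show s ∉ Iio u from h)]
      rw [e1, lintegral_indicator measurableSet_Iio,
        Measure.restrict_restrict measurableSet_Iio]
      have e2 : Iio u ∩ Ioo 0 t = Ioo 0 u := by
        ext x; constructor
        · rintro ⟨h1, h2, h3⟩; exact ⟨h2, h1⟩
        · rintro ⟨h1, h2⟩; exact ⟨h2, h1, lt_trans h2 hu.2⟩
      rw [e2, hKKdef]
      rw [← lintegral_const_mul' (ENNReal.ofReal ((t - u) ^ (p-1))) _ ENNReal.ofReal_ne_top]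
      apply setLIntegral_congr_fun measurableSet_Ioo (fun s hs => ?_)
      rw [← ENNReal.ofReal_mul (rpow_nonneg (by linarith [hu.2] : (0:ℝ) ≤ t - u) _)]
    have hswapped : ∫⁻ u in Ioo 0 t, ∫⁻ s in Ioo 0 t, g u s
        = ∫⁻ s in Ioo 0 t, ∫⁻ u in Ioo 0 t, g u s :=
      lintegral_lintegral_swap hgm.aemeasurable
    have hRHS : ∫⁻ s in Ioo 0 t, ∫⁻ u in Ioo 0 t, g u s
        ≤ ∫⁻ s in Ioo 0 t,
            ENNReal.ofReal (Kc p γ) * ENNReal.ofReal ((t - s) ^ (p + γ - 1) * G s) := by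
      apply lintegral_mono_ae
      filter_upwards [ae_restrict_mem measurableSet_Ioo] with s hs
      have e1 : (fun u => g u s) = (Ioi s).indicator
          (fun u => ENNReal.ofReal ((t - u) ^ (p-1) * ((u - s) ^ (γ-1) * G s))) := by
        funext u
        by_cases h : s < u
        · simp [hgdef, h, Set.indicator_of_mem (show u ∈ Ioi s from h)]
        · simp [hgdef, h, Set.indicator_of_notMem (show u ∉ Ioi s from h)]
      rw [e1, lintegral_indicator measurableSet_Ioi,
        Measure.restrict_restrict measurableSet_Ioi]
      have e2 : Ioi s ∩ Ioo 0 t = Ioo s t := by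
        ext x; constructor
        · rintro ⟨h1, _, h3⟩; exact ⟨h1, h3⟩
        · rintro ⟨h1, h2⟩; exact ⟨h1, lt_trans hs.1 h1, h2⟩
      rw [e2]
      calc ∫⁻ u in Ioo s t, ENNReal.ofReal ((t - u) ^ (p-1) * ((u - s) ^ (γ-1) * G s))
          = ∫⁻ u in Ioo s t, ENNReal.ofReal ((t - u) ^ (p-1) * (u - s) ^ (γ-1))
              * ENNReal.ofReal (G s) := by
            apply setLIntegral_congr_fun measurableSet_Ioo (fun u hu => ?_)
            rw [← ENNReal.ofReal_mul (mul_nonneg (rpow_nonneg (by linarith [hu.2]) _)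
              (rpow_nonneg (by linarith [hu.1]) _)), ← mul_assoc]
        _ = (∫⁻ u in Ioo s t, ENNReal.ofReal ((t - u) ^ (p-1) * (u - s) ^ (γ-1)))
              * ENNReal.ofReal (G s) := lintegral_mul_const' _ _ ENNReal.ofReal_ne_top
        _ ≤ ENNReal.ofReal (Kc p γ * (t - s) ^ (p + γ - 1)) * ENNReal.ofReal (G s) := by
            gcongr
            exact lbeta hp hγ0 hs.2
        _ = ENNReal.ofReal (Kc p γ) * ENNReal.ofReal ((t - s) ^ (p + γ - 1) * G s) := by
            rw [ENNReal.ofReal_mul (Kc_pos hp hγ0).le, mul_assoc,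
              ← ENNReal.ofReal_mul (rpow_nonneg (by linarith [hs.2] : (0:ℝ) ≤ t - s) _)]
    have hfinal : ∫⁻ s in Ioo 0 t,
        ENNReal.ofReal (Kc p γ) * ENNReal.ofReal ((t - s) ^ (p + γ - 1) * G s)
        = ENNReal.ofReal (Kc p γ) * KK (p + γ) t :=
      lintegral_const_mul' _ _ ENNReal.ofReal_ne_top
    rw [hLHS, hswapped]
    exact hRHS.trans (le_of_eq hfinal)
  -- one-step iteration
  have hclaim2 : ∀ p : ℝ, 0 < p → ∀ t ∈ Ioc (0:ℝ) T,
      KK p t ≤ ENNReal.ofReal (a * (Kc p β * t ^ (p + β - 1))) +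
        ENNReal.ofReal (c * Kc p γ) * KK (p + γ) t := by
    intro p hp t ht
    have hsub : Ioo (0:ℝ) t ⊆ Ioc 0 T := fun s hs => ⟨hs.1, le_trans hs.2.le ht.2⟩
    have hptw : ∀ᵐ u ∂(volume.restrict (Ioo 0 t)),
        ENNReal.ofReal ((t - u) ^ (p-1) * G u) ≤
          ENNReal.ofReal ((t - u) ^ (p-1) * (a * u ^ (β-1)))
            + ENNReal.ofReal c * (ENNReal.ofReal ((t - u) ^ (p-1)) * KK γ u) := by
      filter_upwards [ae_restrict_mem measurableSet_Ioo,
        ae_restrict_of_ae_restrict_of_subset hsub hfG] with u hu hfu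
      have hker : (0:ℝ) ≤ (t - u) ^ (p-1) := rpow_nonneg (by linarith [hu.2]) _
      rw [ENNReal.ofReal_mul hker, ← hfu]
      calc ENNReal.ofReal ((t-u)^(p-1)) * ENNReal.ofReal (f u)
          ≤ ENNReal.ofReal ((t-u)^(p-1)) *
              (ENNReal.ofReal (a * u ^ (β-1)) + ENNReal.ofReal c * KK γ u) := by
            gcongr
            exact hof u (hsub hu)
        _ = ENNReal.ofReal ((t-u)^(p-1) * (a * u^(β-1)))
              + ENNReal.ofReal c * (ENNReal.ofReal ((t-u)^(p-1)) * KK γ u) := by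
            rw [mul_add, ENNReal.ofReal_mul hker]
            ring
    have hfe : (fun u : ℝ => (t - u)^(p-1) * (a * u^(β-1)))
        = (fun u : ℝ => a * ((t - u)^(p-1) * u^(β-1))) := by
      funext u; ring
    have hint : IntegrableOn (fun u : ℝ => (t - u)^(p-1) * (a * u^(β-1))) (Ioo 0 t) := by
      rw [hfe]; exact (beta_bound hp hβ0 ht.1).1.const_mul a
    have hfirst : ∫⁻ u in Ioo 0 t, ENNReal.ofReal ((t - u) ^ (p-1) * (a * u ^ (β-1)))
        ≤ ENNReal.ofReal (a * (Kc p β * t ^ (p + β - 1))) := by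
      rw [← ofReal_integral_eq_lintegral_ofReal hint (by
        filter_upwards [ae_restrict_mem measurableSet_Ioo] with u hu
        exact mul_nonneg (rpow_nonneg (by linarith [hu.2]) _)
          (mul_nonneg ha (rpow_nonneg hu.1.le _)))]
      apply ENNReal.ofReal_le_ofReal
      rw [hfe, MeasureTheory.integral_const_mul]
      exact mul_le_mul_of_nonneg_left (beta_bound hp hβ0 ht.1).2 ha
    have hsecond : ∫⁻ u in Ioo 0 t,
        ENNReal.ofReal c * (ENNReal.ofReal ((t - u) ^ (p-1)) * KK γ u)
        ≤ ENNReal.ofReal (c * Kc p γ) * KK (p + γ) t := by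
      rw [lintegral_const_mul' _ _ ENNReal.ofReal_ne_top, ENNReal.ofReal_mul hc, mul_assoc]
      gcongr
      exact hswap p hp t ht.1
    calc KK p t ≤ ∫⁻ u in Ioo 0 t, (ENNReal.ofReal ((t - u) ^ (p-1) * (a * u ^ (β-1)))
            + ENNReal.ofReal c * (ENNReal.ofReal ((t - u) ^ (p-1)) * KK γ u)) :=
          lintegral_mono_ae hptw
      _ = (∫⁻ u in Ioo 0 t, ENNReal.ofReal ((t - u) ^ (p-1) * (a * u ^ (β-1))))
            + ∫⁻ u in Ioo 0 t, ENNReal.ofReal c * (ENNReal.ofReal ((t - u) ^ (p-1)) * KK γ u) :=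
          lintegral_add_left (((measurable_const.sub measurable_id).pow
            measurable_const).mul ((measurable_const.mul
              (measurable_id.pow measurable_const)))).ennreal_ofReal _
      _ ≤ ENNReal.ofReal (a * (Kc p β * t ^ (p + β - 1)))
            + ENNReal.ofReal (c * Kc p γ) * KK (p + γ) t := add_le_add hfirst hsecond
  set Tm : ℝ := max T 1 with hTmdef
  have hTm1 : (1:ℝ) ≤ Tm := le_max_right _ _
  have hTm0 : (0:ℝ) < Tm := lt_of_lt_of_le one_pos hTm1
  have hTmT : T ≤ Tm := le_max_left _ _
  -- iterated chain
  have hchain : ∀ j : ℕ, ∃ D E : ℝ, 0 ≤ D ∧ 0 ≤ E ∧ ∀ t ∈ Ioc (0:ℝ) T,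
      KK γ t ≤ ENNReal.ofReal (D * (a * t ^ (β - 1))) +
        ENNReal.ofReal E * KK (((j:ℝ) + 1) * γ) t := by
    intro j
    induction j with
    | zero =>
      refine ⟨0, 1, le_refl _, zero_le_one, fun t ht => ?_⟩
      have he : (((0:ℕ):ℝ) + 1) * γ = γ := by push_cast; ring
      rw [he]
      simp
    | succ j ih =>
      obtain ⟨D, E, hD, hE, hb⟩ := ih
      set p : ℝ := ((j:ℝ) + 1) * γ with hpdef
      have hppos : 0 < p := by positivity
      have hKpβ : 0 < Kc p β := Kc_pos hppos hβ0
      have hKpγ : 0 < Kc p γ := Kc_pos hppos hγ0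
      have hTmp : (0:ℝ) < Tm ^ p := rpow_pos_of_pos hTm0 _
      refine ⟨D + E * (Kc p β * Tm ^ p), E * (c * Kc p γ), by positivity, by positivity,
        fun t ht => ?_⟩
      have hcast : p + γ = (((j+1:ℕ):ℝ) + 1) * γ := by push_cast; ring
      rw [← hcast]
      have hX : (0:ℝ) ≤ a * t ^ (β - 1) := mul_nonneg ha (rpow_nonneg ht.1.le _)
      have hTp : t ^ (p + β - 1) ≤ Tm ^ p * t ^ (β - 1) := by
        have he2 : t ^ (p+β-1) = t ^ p * t ^ (β-1) := by
          rw [← rpow_add ht.1]; ring_nf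
        rw [he2]
        exact mul_le_mul_of_nonneg_right
          (rpow_le_rpow ht.1.le (le_trans ht.2 hTmT) hppos.le) (rpow_nonneg ht.1.le _)
      have hA : ENNReal.ofReal E * ENNReal.ofReal (a * (Kc p β * t^(p+β-1)))
          ≤ ENNReal.ofReal (E*(Kc p β * Tm^p) * (a * t^(β-1))) := by
        rw [← ENNReal.ofReal_mul hE]
        apply ENNReal.ofReal_le_ofReal
        nlinarith [mul_le_mul_of_nonneg_left hTp (mul_nonneg (mul_nonneg hE ha) hKpβ.le)]
      calc KK γ t ≤ ENNReal.ofReal (D*(a*t^(β-1))) + ENNReal.ofReal E * KK p t := hb t ht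
        _ ≤ ENNReal.ofReal (D*(a*t^(β-1))) + ENNReal.ofReal E *
              (ENNReal.ofReal (a * (Kc p β * t^(p+β-1)))
                + ENNReal.ofReal (c*Kc p γ) * KK (p+γ) t) := by
            gcongr
            exact hclaim2 p hppos t ht
        _ = ENNReal.ofReal (D*(a*t^(β-1))) + ENNReal.ofReal E *
              ENNReal.ofReal (a * (Kc p β * t^(p+β-1)))
                + ENNReal.ofReal E * (ENNReal.ofReal (c*Kc p γ) * KK (p+γ) t) := by
            rw [mul_add]; ring
        _ ≤ ENNReal.ofReal (D*(a*t^(β-1))) + ENNReal.ofReal (E*(Kc p β * Tm^p) * (a * t^(β-1)))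
              + ENNReal.ofReal (E*(c*Kc p γ)) * KK (p+γ) t := by
            have hB : ENNReal.ofReal E * (ENNReal.ofReal (c*Kc p γ) * KK (p+γ) t)
                = ENNReal.ofReal (E*(c*Kc p γ)) * KK (p+γ) t := by
              rw [← mul_assoc, ← ENNReal.ofReal_mul hE]
            rw [hB]
            exact add_le_add_left (add_le_add_right hA _) _
        _ = ENNReal.ofReal ((D + E * (Kc p β * Tm ^ p)) * (a * t ^ (β - 1)))
              + ENNReal.ofReal (E*(c*Kc p γ)) * KK (p+γ) t := by
            rw [← ENNReal.ofReal_add (mul_nonneg hD hX)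
              (mul_nonneg (mul_nonneg hE (mul_nonneg hKpβ.le hTmp.le)) hX)]
            congr 1
            ring
  -- smallness radius
  set r₀ : ℝ := min T (min ((2*c*Kc 1 γ)⁻¹ ^ (γ⁻¹)) ((2*c*Kc γ 1)⁻¹ ^ (γ⁻¹))) with hr₀def
  have hK1γ : 0 < Kc 1 γ := Kc_pos one_pos hγ0
  have hKγ1 : 0 < Kc γ 1 := Kc_pos hγ0 one_pos
  have hr₀pos : 0 < r₀ := by
    apply lt_min hT
    exact lt_min (rpow_pos_of_pos (by positivity) _) (rpow_pos_of_pos (by positivity) _)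
  have hr₀T : r₀ ≤ T := min_le_left _ _
  have hsmall : ∀ K : ℝ, 0 < K → ∀ t : ℝ, 0 < t → t ≤ (2*c*K)⁻¹ ^ (γ⁻¹) →
      c * K * t ^ γ ≤ 1/2 := by
    intro K hK t ht hle
    have h1 : t ^ γ ≤ ((2*c*K)⁻¹ ^ (γ⁻¹)) ^ γ := rpow_le_rpow ht.le hle hγ0.le
    have h2 : ((2*c*K)⁻¹ ^ (γ⁻¹)) ^ γ = (2*c*K)⁻¹ := by
      rw [← rpow_mul (by positivity), inv_mul_cancel₀ (ne_of_gt hγ0), rpow_one]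
    rw [h2] at h1
    have hcK : (0:ℝ) < 2*c*K := by positivity
    calc c * K * t ^ γ ≤ c * K * (2*c*K)⁻¹ := by
          apply mul_le_mul_of_nonneg_left h1 (by positivity)
      _ = 1/2 := by field_simp
  have hsmall1 : ∀ t : ℝ, 0 < t → t ≤ r₀ → c * Kc 1 γ * t ^ γ ≤ 1/2 := by
    intro t ht hle
    exact hsmall _ hK1γ t ht (le_trans hle (le_trans (min_le_right _ _) (min_le_left _ _)))
  have hsmall2 : ∀ t : ℝ, 0 < t → t ≤ r₀ → c * Kc γ 1 * t ^ γ ≤ 1/2 := by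
    intro t ht hle
    exact hsmall _ hKγ1 t ht (le_trans hle (le_trans (min_le_right _ _) (min_le_right _ _)))
  -- absorption for FF
  have habsorb : ∀ t ∈ Ioc (0:ℝ) T, t ≤ r₀ → FF t ≠ ⊤ →
      FF t ≤ ENNReal.ofReal (2 * (a * t ^ β / β)) := by
    intro t ht htr hfin
    have hsub : Ioo (0:ℝ) t ⊆ Ioc 0 T := fun s hs => ⟨hs.1, le_trans hs.2.le ht.2⟩
    have hstepA : FF t ≤ ENNReal.ofReal (a * (t^β/β))
        + ENNReal.ofReal c * ∫⁻ u in Ioo 0 t, KK γ u := by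
      have hptw : ∀ᵐ u ∂(volume.restrict (Ioo 0 t)), ENNReal.ofReal (G u) ≤
          ENNReal.ofReal (a * u ^ (β-1)) + ENNReal.ofReal c * KK γ u := by
        filter_upwards [ae_restrict_mem measurableSet_Ioo,
          ae_restrict_of_ae_restrict_of_subset hsub hfG] with u hu hfu
        rw [← hfu]
        exact hof u (hsub hu)
      calc FF t ≤ ∫⁻ u in Ioo 0 t,
            (ENNReal.ofReal (a * u ^ (β-1)) + ENNReal.ofReal c * KK γ u) :=
          lintegral_mono_ae hptw
        _ = (∫⁻ u in Ioo 0 t, ENNReal.ofReal (a * u ^ (β-1)))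
            + ∫⁻ u in Ioo 0 t, ENNReal.ofReal c * KK γ u :=
          lintegral_add_left ((measurable_const.mul
            (measurable_id.pow measurable_const)).ennreal_ofReal) _
        _ ≤ ENNReal.ofReal (a * (t^β/β)) + ENNReal.ofReal c * ∫⁻ u in Ioo 0 t, KK γ u := by
          gcongr
          · have he : ∀ᵐ u ∂(volume.restrict (Ioo 0 t)), ENNReal.ofReal (a * u ^ (β-1))
                = ENNReal.ofReal a * ENNReal.ofReal (u ^ (β-1)) := by
              apply ae_of_all; intro u; rw [ENNReal.ofReal_mul ha]
            rw [lintegral_congr_ae he, lintegral_const_mul' _ _ ENNReal.ofReal_ne_top,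
              lint_rpow hβ0 ht.1.le, ← ENNReal.ofReal_mul ha]
          · rw [lintegral_const_mul' _ _ ENNReal.ofReal_ne_top]
    have hstepB : ∫⁻ u in Ioo 0 t, KK γ u ≤ ENNReal.ofReal (Kc 1 γ) * KK (1+γ) t := by
      have h := hswap 1 one_pos t ht.1
      have he : (1:ℝ) - 1 = 0 := by norm_num
      simp only [he, Real.rpow_zero, ENNReal.ofReal_one, one_mul] at h
      exact h
    have hstepC : KK (1+γ) t ≤ ENNReal.ofReal (t^γ) * FF t := by
      have hKKe : KK (1+γ) t = ∫⁻ u in Ioo 0 t, ENNReal.ofReal ((t-u) ^ γ * G u) := by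
        rw [hKKdef]
        simp only [show (1:ℝ) + γ - 1 = γ by ring]
      rw [hKKe, hFFdef]
      rw [← lintegral_const_mul' _ _ ENNReal.ofReal_ne_top]
      apply lintegral_mono_ae
      filter_upwards [ae_restrict_mem measurableSet_Ioo] with u hu
      rw [← ENNReal.ofReal_mul (rpow_nonneg ht.1.le _)]
      exact ENNReal.ofReal_le_ofReal (mul_le_mul_of_nonneg_right
        (rpow_le_rpow (by linarith [hu.2]) (by linarith [hu.1]) hγ0.le) (hGnn u))
    have hKc1γ0 : (0:ℝ) ≤ c * Kc 1 γ := mul_nonneg hc (Kc_pos one_pos hγ0).le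
    have hkey : FF t ≤ ENNReal.ofReal (a * (t^β/β)) + ENNReal.ofReal (1/2) * FF t := by
      refine hstepA.trans (add_le_add_right ?_ _)
      calc ENNReal.ofReal c * ∫⁻ u in Ioo 0 t, KK γ u
          ≤ ENNReal.ofReal c * (ENNReal.ofReal (Kc 1 γ) * (ENNReal.ofReal (t^γ) * FF t)) :=
            mul_le_mul_right (hstepB.trans (mul_le_mul_right hstepC _)) _
        _ = ENNReal.ofReal (c * Kc 1 γ * t^γ) * FF t := by
            rw [← mul_assoc, ← mul_assoc, ← ENNReal.ofReal_mul hc,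
              ← ENNReal.ofReal_mul hKc1γ0]
        _ ≤ ENNReal.ofReal (1/2) * FF t :=
            mul_le_mul_left (ENNReal.ofReal_le_ofReal (hsmall1 t ht.1 htr)) _
    have hA0 : (0:ℝ) ≤ a * (t^β/β) := mul_nonneg ha (div_nonneg (rpow_nonneg ht.1.le _) hβ0.le)
    have hfin1 : ENNReal.ofReal (a * (t^β/β)) ≠ ⊤ := ENNReal.ofReal_ne_top
    have hfin2 : ENNReal.ofReal (1/2) * FF t ≠ ⊤ := ENNReal.mul_ne_top ENNReal.ofReal_ne_top hfin
    have hx := ENNReal.toReal_mono (by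
        exact ENNReal.add_ne_top.mpr ⟨hfin1, hfin2⟩) hkey
    rw [ENNReal.toReal_add hfin1 hfin2, ENNReal.toReal_mul,
      ENNReal.toReal_ofReal hA0, ENNReal.toReal_ofReal (by norm_num : (0:ℝ) ≤ 1/2)] at hx
    have hx2 : (FF t).toReal ≤ 2 * (a * t^β/β) := by
      rw [mul_div_assoc]
      linarith
    calc FF t = ENNReal.ofReal (FF t).toReal := (ENNReal.ofReal_toReal hfin).symm
      _ ≤ ENNReal.ofReal (2 * (a * t ^ β / β)) := ENNReal.ofReal_le_ofReal hx2
  -- core bound on (0, r₀]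
  have hcore : ∃ C₀ : ℝ, 1 ≤ C₀ ∧ ∀ t ∈ Ioc (0:ℝ) T, t ≤ r₀ → f t ≤ C₀ * (a * t ^ (β - 1)) := by
    set n₀ : ℕ := Nat.ceil (1/γ) with hn₀
    obtain ⟨D, E, hD, hE, hb⟩ := hchain n₀
    have hterm : (1:ℝ) ≤ ((n₀:ℝ) + 1) * γ := by
      have h1 : 1/γ ≤ (n₀:ℝ) := Nat.le_ceil _
      have h2 := mul_le_mul_of_nonneg_right h1 hγ0.le
      rw [one_div, inv_mul_cancel₀ (ne_of_gt hγ0)] at h2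
      nlinarith
    have hTme : (0:ℝ) < Tm ^ (((n₀:ℝ)+1)*γ) := rpow_pos_of_pos hTm0 _
    set D₂ : ℝ := D + E * (2 / β * Tm ^ (((n₀:ℝ)+1)*γ)) with hD₂
    have h2β : (0:ℝ) ≤ 2 / β := by positivity
    have hD₂0 : 0 ≤ D₂ := add_nonneg hD (mul_nonneg hE (mul_nonneg h2β hTme.le))
    refine ⟨1 + c * D₂, by nlinarith [mul_nonneg hc hD₂0], fun t ht htr => ?_⟩
    have hX : (0:ℝ) ≤ a * t ^ (β-1) := mul_nonneg ha (rpow_nonneg ht.1.le _)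
    by_cases hfin : FF t = ⊤
    · have hKtop : KK γ t = ⊤ := by
        have hlow : ENNReal.ofReal (t ^ (γ-1)) * FF t ≤ KK γ t := by
          rw [hFFdef, hKKdef, ← lintegral_const_mul' _ _ ENNReal.ofReal_ne_top]
          apply lintegral_mono_ae
          filter_upwards [ae_restrict_mem measurableSet_Ioo] with u hu
          rw [← ENNReal.ofReal_mul (rpow_nonneg ht.1.le _)]
          apply ENNReal.ofReal_le_ofReal
          apply mul_le_mul_of_nonneg_right _ (hGnn u)
          exact rpow_le_rpow_of_nonpos (by linarith [hu.2]) (by linarith [hu.1]) (by linarith)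
        have htop : ENNReal.ofReal (t ^ (γ-1)) * FF t = ⊤ := by
          rw [hfin]
          exact ENNReal.mul_top ((ENNReal.ofReal_pos.mpr (rpow_pos_of_pos ht.1 _)).ne')
        exact top_le_iff.mp (htop ▸ hlow)
      have h := hreal t ht
      rw [hKtop] at h
      simp only [ENNReal.toReal_top, mul_zero, add_zero] at h
      nlinarith [mul_nonneg (mul_nonneg hc hD₂0) hX]
    · have hFb := habsorb t ht htr hfin
      have h1 := hb t ht
      have h2 : KK (((n₀:ℝ)+1)*γ) t ≤ ENNReal.ofReal (t ^ (((n₀:ℝ)+1)*γ - 1)) * FF t := by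
        rw [hKKdef, hFFdef, ← lintegral_const_mul' _ _ ENNReal.ofReal_ne_top]
        apply lintegral_mono_ae
        filter_upwards [ae_restrict_mem measurableSet_Ioo] with u hu
        rw [← ENNReal.ofReal_mul (rpow_nonneg ht.1.le _)]
        apply ENNReal.ofReal_le_ofReal
        apply mul_le_mul_of_nonneg_right _ (hGnn u)
        exact rpow_le_rpow (by linarith [hu.2]) (by linarith [hu.1]) (by linarith)
      have h3 : ENNReal.ofReal E * (ENNReal.ofReal (t ^ (((n₀:ℝ)+1)*γ - 1)) *
          ENNReal.ofReal (2 * (a * t ^ β / β)))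
          ≤ ENNReal.ofReal (E * (2/β * Tm ^ (((n₀:ℝ)+1)*γ)) * (a * t ^ (β-1))) := by
        rw [← ENNReal.ofReal_mul (rpow_nonneg ht.1.le _), ← ENNReal.ofReal_mul hE]
        apply ENNReal.ofReal_le_ofReal
        have he1 : t ^ (((n₀:ℝ)+1)*γ - 1) * t ^ β = t ^ (((n₀:ℝ)+1)*γ) * t ^ (β - 1) := by
          rw [← rpow_add ht.1, ← rpow_add ht.1]; ring_nf
        have he2 : t ^ (((n₀:ℝ)+1)*γ) ≤ Tm ^ (((n₀:ℝ)+1)*γ) :=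
          rpow_le_rpow ht.1.le (le_trans ht.2 hTmT) (by positivity)
        have hcoef : (0:ℝ) ≤ 2*E*a/β := div_nonneg (mul_nonneg (mul_nonneg (by norm_num) hE) ha) hβ0.le
        calc E * (t ^ (((n₀:ℝ)+1)*γ - 1) * (2 * (a * t ^ β / β)))
            = (2*E*a/β) * (t ^ (((n₀:ℝ)+1)*γ - 1) * t ^ β) := by ring
          _ = (2*E*a/β) * (t ^ (((n₀:ℝ)+1)*γ) * t ^ (β-1)) := by rw [he1]
          _ ≤ (2*E*a/β) * (Tm ^ (((n₀:ℝ)+1)*γ) * t ^ (β-1)) :=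
              mul_le_mul_of_nonneg_left
                (mul_le_mul_of_nonneg_right he2 (rpow_nonneg ht.1.le _)) hcoef
          _ = E * (2/β * Tm ^ (((n₀:ℝ)+1)*γ)) * (a * t ^ (β-1)) := by ring
      have h4 : KK γ t ≤ ENNReal.ofReal (D₂ * (a * t ^ (β-1))) := by
        refine (h1.trans (add_le_add_right (le_trans
          (mul_le_mul_right (h2.trans (mul_le_mul_right hFb _)) _) h3) _)).trans ?_
        rw [← ENNReal.ofReal_add (mul_nonneg hD hX)
          (mul_nonneg (mul_nonneg hE (mul_nonneg h2β hTme.le)) hX)]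
        exact ENNReal.ofReal_le_ofReal (le_of_eq (by rw [hD₂]; ring))
      have h5 : (KK γ t).toReal ≤ D₂ * (a * t^(β-1)) := by
        have h6 := ENNReal.toReal_mono ENNReal.ofReal_ne_top h4
        rwa [ENNReal.toReal_ofReal (mul_nonneg hD₂0 hX)] at h6
      have h6 := hreal t ht
      nlinarith [mul_le_mul_of_nonneg_left h5 hc]
  obtain ⟨C₀, hC₀1, hC₀⟩ := hcore
  have hC₀pos : 0 < C₀ := lt_of_lt_of_le one_pos hC₀1
  -- split on a
  rcases eq_or_lt_of_le ha with ha0 | ha0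
  · -- a = 0 : f ≡ 0
    have hzero : ∀ n : ℕ, ∀ t ∈ Ioc (0:ℝ) T, t ≤ ((n:ℝ) + 1) * r₀ → f t = 0 := by
      intro n
      induction n with
      | zero =>
        intro t ht htn
        have h := hC₀ t ht (by push_cast at htn; linarith)
        rw [← ha0] at h
        simp only [zero_mul, mul_zero] at h
        exact le_antisymm h (hnonneg t ht)
      | succ n ih =>
        intro t ht htn
        by_cases hle : t ≤ ((n:ℝ) + 1) * r₀
        · exact ih t ht hle
        · push_neg at hle
          set tk : ℝ := ((n:ℝ) + 1) * r₀ with htk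
          have htk0 : 0 < tk := by positivity
          have htkT : tk < T := lt_of_lt_of_le hle ht.2
          set b : ℝ := min (((n:ℝ) + 2) * r₀) T with hbdef
          have htb : t ≤ b := le_min (by push_cast at htn ⊢; linarith) ht.2
          have htkb : tk < b := lt_of_lt_of_le hle htb
          have hbT : b ≤ T := min_le_right _ _
          have hJsub : Icc tk b ⊆ Ioc 0 T := fun x hx =>
            ⟨lt_of_lt_of_le htk0 hx.1, le_trans hx.2 hbT⟩
          obtain ⟨x₀, hx₀J, hmax⟩ := isCompact_Icc.exists_isMaxOn
            ⟨tk, le_refl _, htkb.le⟩ (hcont.mono hJsub)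
          set M : ℝ := f x₀ with hMdef
          have hM0 : 0 ≤ M := hnonneg x₀ (hJsub hx₀J)
          have hkey : ∀ t' ∈ Icc tk b, tk < t' → f t' ≤ 1/2 * M := by
            intro t' ht'J ht'k
            have ht' : t' ∈ Ioc (0:ℝ) T := hJsub ht'J
            have h := hineq t' ht'
            rw [← ha0, zero_mul, zero_add] at h
            have hind : (Ioo (0:ℝ) t').indicator (fun s => (t' - s) ^ (γ-1) * f s)
                = (Ioo tk t').indicator (fun s => (t' - s) ^ (γ-1) * f s) := by
              funext s
              by_cases h1 : s ∈ Ioo tk t'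
              · rw [Set.indicator_of_mem h1,
                  Set.indicator_of_mem (show s ∈ Ioo (0:ℝ) t' from ⟨lt_trans htk0 h1.1, h1.2⟩)]
              · rw [Set.indicator_of_notMem h1]
                by_cases h2 : s ∈ Ioo (0:ℝ) t'
                · rw [Set.indicator_of_mem h2]
                  have hs_le : s ≤ tk := by
                    by_contra hgt
                    push_neg at hgt
                    exact h1 ⟨hgt, h2.2⟩
                  rw [ih s ⟨h2.1, le_trans h2.2.le ht'.2⟩ hs_le, mul_zero]
                · rw [Set.indicator_of_notMem h2]
            have heq : ∫ s in Ioo (0:ℝ) t', (t' - s) ^ (γ-1) * f s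
                = ∫ s in Ioo tk t', (t' - s) ^ (γ-1) * f s := by
              rw [← integral_indicator measurableSet_Ioo, hind,
                integral_indicator measurableSet_Ioo]
            rw [heq] at h
            have hbound : ∫ s in Ioo tk t', (t' - s) ^ (γ-1) * f s
                ≤ ∫ s in Ioo tk t', (t' - s) ^ (γ-1) * M := by
              apply integral_mono_of_nonneg
              · filter_upwards [ae_restrict_mem measurableSet_Ioo] with s hs
                exact mul_nonneg (rpow_nonneg (by linarith [hs.2]) _)
                  (hnonneg s ⟨lt_trans htk0 hs.1, le_trans hs.2.le ht'.2⟩)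
              · exact (intOn_rpow_sub hγ0 ht'k.le).mul_const M
              · filter_upwards [ae_restrict_mem measurableSet_Ioo] with s hs
                apply mul_le_mul_of_nonneg_left _ (rpow_nonneg (by linarith [hs.2]) _)
                exact hmax ⟨hs.1.le, le_trans hs.2.le ht'J.2⟩
            have hval : ∫ s in Ioo tk t', (t' - s) ^ (γ-1) * M = ((t' - tk) ^ γ / γ) * M := by
              rw [MeasureTheory.integral_mul_const, int_rpow_sub_Ioo hγ0 ht'k.le]
            have hsm : c * ((t' - tk) ^ γ / γ) ≤ 1/2 := by
              have hd0 : 0 < t' - tk := by linarith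
              have hdr : t' - tk ≤ r₀ := by
                have hb2 : b ≤ ((n:ℝ)+2)*r₀ := min_le_left _ _
                have := ht'J.2
                rw [htk]
                nlinarith
              have hs2 := hsmall2 (t' - tk) hd0 hdr
              have hKγ1ge : 1/γ ≤ Kc γ 1 := by
                have h2γ : (0:ℝ) < (2:ℝ)^(1-γ) := rpow_pos_of_pos two_pos _
                unfold Kc
                rw [div_one, show (1:ℝ)-1 = 0 by norm_num, rpow_zero]
                have h1 : 1/γ ≤ (1+1)/γ := by
                  gcongr
                  norm_num
                linarith
              have hker0 : (0:ℝ) ≤ (t'-tk)^γ := rpow_nonneg hd0.le _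
              have hstep := mul_le_mul_of_nonneg_right
                (mul_le_mul_of_nonneg_left hKγ1ge hc) hker0
              calc c * ((t' - tk) ^ γ / γ) = c * (1/γ) * (t'-tk)^γ := by ring
                _ ≤ c * Kc γ 1 * (t'-tk)^γ := hstep
                _ ≤ 1/2 := hs2
            calc f t' ≤ c * (((t' - tk) ^ γ / γ) * M) := by
                  rw [← hval]
                  exact le_trans h (mul_le_mul_of_nonneg_left hbound hc)
              _ = (c * ((t' - tk) ^ γ / γ)) * M := by ring
              _ ≤ 1/2 * M := mul_le_mul_of_nonneg_right hsm hM0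
          have hMneg : M ≤ 0 := by
            rcases eq_or_lt_of_le hx₀J.1 with heqx | hltx
            · have hfz : f tk = 0 := ih tk ⟨htk0, htkT.le⟩ (le_refl _)
              rw [hMdef, ← heqx, hfz]
            · linarith [hkey x₀ hx₀J hltx]
          have hft := hkey t ⟨hle.le, htb⟩ hle
          exact le_antisymm (by linarith) (hnonneg t ht)
    refine ⟨1, one_pos, fun t ht => ?_⟩
    obtain ⟨n, hn⟩ := exists_nat_ge (t / r₀)
    have htn : t ≤ ((n:ℝ) + 1) * r₀ := by
      rw [div_le_iff₀ hr₀pos] at hn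
      nlinarith [hr₀pos]
    rw [hzero n t ht htn, ← ha0]
    simp
  · -- a > 0
    by_cases hTr : T ≤ r₀
    · refine ⟨C₀, hC₀pos, fun t ht => ?_⟩
      rw [mul_assoc]
      exact hC₀ t ht (le_trans ht.2 hTr)
    · push_neg at hTr
      have hJne : (Icc r₀ T).Nonempty := ⟨r₀, le_refl _, hr₀T⟩
      have hJsub : Icc r₀ T ⊆ Ioc 0 T := fun x hx => ⟨lt_of_lt_of_le hr₀pos hx.1, hx.2⟩
      obtain ⟨x₀, hx₀J, hmax⟩ := isCompact_Icc.exists_isMaxOn hJne (hcont.mono hJsub)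
      set M : ℝ := f x₀ with hMdef
      have hM0 : 0 ≤ M := hnonneg x₀ (hJsub hx₀J)
      refine ⟨C₀ + M * T ^ (1 - β) / a, by positivity, fun t ht => ?_⟩
      have htb : (0:ℝ) ≤ a * t ^ (β - 1) := by
        have := rpow_nonneg ht.1.le (β - 1); positivity
      by_cases htr : t ≤ r₀
      · have := hC₀ t ht htr
        rw [mul_assoc]
        nlinarith [mul_nonneg (div_nonneg (mul_nonneg hM0 (rpow_nonneg hT.le (1-β))) ha) htb]
      · push_neg at htr
        have htJ : t ∈ Icc r₀ T := ⟨htr.le, ht.2⟩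
        have hfM : f t ≤ M := hmax htJ
        have h1 : T ^ (β - 1) ≤ t ^ (β - 1) :=
          rpow_le_rpow_of_nonpos ht.1 ht.2 (by linarith)
        have h2 : T ^ (1 - β) * T ^ (β - 1) = 1 := by
          rw [← rpow_add hT]; norm_num
        have h3 : (0:ℝ) < T ^ (1 - β) := rpow_pos_of_pos hT _
        have h4 : M ≤ M * T ^ (1 - β) / a * (a * t ^ (β - 1)) := by
          have key : M * T ^ (1 - β) / a * (a * t ^ (β - 1)) = M * (T ^ (1-β) * t ^ (β-1)) := by
            field_simp
          rw [key]
          have h5 : T ^ (1-β) * T ^ (β-1) ≤ T ^ (1-β) * t ^ (β-1) :=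
            mul_le_mul_of_nonneg_left h1 h3.le
          nlinarith [mul_le_mul_of_nonneg_left h5 hM0]
        rw [mul_assoc]
        nlinarith [mul_nonneg hC₀pos.le htb]
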